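/- For all positive integers m and k, N_{mk}(q, N₁) = N_m(q^k, N_k(q, N₁)), where N_k(q, t) is the bivariate polynomial defined by N_k = 1 + q^k − α₁^k − α₂^k with α₁+α₂ = 1+q−t and α₁α₂ = q. -/

import Mathlib

/-- Power sums `s k = α₁^k + α₂^k` of the roots of `X² - (1+q-t)X + q`, as elements of
`ℤ[q, t]` (with `q = X 0`, `t = X 1`), via Newton's recurrence. -/
noncomputable def powerSumQT : ℕ → MvPolynomial (Fin 2) ℤ
  | 0 => 2
  | 1 => 1 + MvPolynomial.X 0 - MvPolynomial.X 1
  | k + 2 =>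
      (1 + MvPolynomial.X 0 - MvPolynomial.X 1) * powerSumQT (k + 1)
        - MvPolynomial.X 0 * powerSumQT k

/-- `N_k(q,t) = 1 + q^k - α₁^k - α₂^k ∈ ℤ[q,t]`. -/
noncomputable def NkQT (k : ℕ) : MvPolynomial (Fin 2) ℤ :=
  1 + (MvPolynomial.X 0) ^ k - powerSumQT k

open MvPolynomial Matrix in
lemma matrix_sq_eq {R : Type*} [CommRing R] (A : Matrix (Fin 2) (Fin 2) R) :
    A ^ 2 = A.trace • A - A.det • (1 : Matrix (Fin 2) (Fin 2) R) := by
  ext i j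
  fin_cases i <;> fin_cases j <;>
    simp [pow_two, Matrix.mul_apply, Fin.sum_univ_two, Matrix.trace_fin_two,
      Matrix.det_fin_two, Matrix.one_apply] <;> ring

open MvPolynomial Matrix in
lemma trace_pow_eq {R : Type*} [CommRing R] (A : Matrix (Fin 2) (Fin 2) R) (m : ℕ) :
    (A ^ m).trace = aeval ![A.det, 1 + A.det - A.trace] (powerSumQT m) := by
  induction m using Nat.twoStepInduction with
  | zero => simp [powerSumQT, Matrix.trace_one]
  | one =>
      simp [powerSumQT, map_sub, map_add]
  | more n ih1 ih2 =>
      have hA : A ^ (n + 2) = A.trace • A ^ (n + 1) - A.det • A ^ n := by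
        rw [pow_add, matrix_sq_eq, Matrix.mul_sub, mul_smul_comm, mul_smul_comm,
          Matrix.mul_one, ← pow_succ]
      rw [hA, powerSumQT]
      simp only [map_sub, _root_.map_mul, map_add, _root_.map_one, aeval_X,
        Matrix.trace_sub, Matrix.trace_smul, smul_eq_mul]
      rw [ih1, ih2]
      simp [Matrix.cons_val_zero, Matrix.cons_val_one]

theorem Nk_composition (m k : ℕ) (hm : 1 ≤ m) (hk : 1 ≤ k) :
    NkQT (m * k) = MvPolynomial.aeval ![(MvPolynomial.X 0 : MvPolynomial (Fin 2) ℤ) ^ k, NkQT k] (NkQT m) := by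
  classical
  open MvPolynomial Matrix in
  set p : MvPolynomial (Fin 2) ℤ := 1 + X 0 - X 1 with hp
  set A : Matrix (Fin 2) (Fin 2) (MvPolynomial (Fin 2) ℤ) := !![p, -X 0; 1, 0] with hAdef
  have htr : A.trace = p := by simp [hAdef, Matrix.trace_fin_two]
  have hdet : A.det = MvPolynomial.X 0 := by simp [hAdef, Matrix.det_fin_two]
  have hs : ∀ n, powerSumQT n = (A ^ n).trace := by
    intro n
    rw [trace_pow_eq, htr, hdet]
    have hv : (![MvPolynomial.X 0, 1 + MvPolynomial.X 0 - p] : Fin 2 → MvPolynomial (Fin 2) ℤ)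
        = MvPolynomial.X := by
      funext i; fin_cases i
      · simp
      · show 1 + MvPolynomial.X 0 - p = MvPolynomial.X 1
        rw [hp]; ring
    rw [hv]
    exact (MvPolynomial.aeval_X_left_apply (powerSumQT n)).symm
  have key := trace_pow_eq (A ^ k) m
  rw [← pow_mul, Matrix.det_pow, hdet, ← hs k] at key
  have hvec : (![(MvPolynomial.X 0 : MvPolynomial (Fin 2) ℤ) ^ k,
      1 + MvPolynomial.X 0 ^ k - powerSumQT k] : Fin 2 → MvPolynomial (Fin 2) ℤ)
      = ![(MvPolynomial.X 0 : MvPolynomial (Fin 2) ℤ) ^ k, NkQT k] := by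
    funext i; fin_cases i <;> simp [NkQT]
  rw [hvec] at key
  have hrhs : (MvPolynomial.aeval ![(MvPolynomial.X 0 : MvPolynomial (Fin 2) ℤ) ^ k, NkQT k]) (NkQT m)
      = 1 + MvPolynomial.X 0 ^ (m * k) - powerSumQT (m * k) := by
    rw [show NkQT m = 1 + (MvPolynomial.X 0) ^ m - powerSumQT m from rfl]
    rw [map_sub, map_add, _root_.map_one, map_pow, MvPolynomial.aeval_X]
    erw [← key]
    rw [Nat.mul_comm k m, ← hs (m * k)]
    simp [← pow_mul]
    rw [Nat.mul_comm k m]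
  rw [hrhs]
  rfl
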